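/- For every x ≥ 0, the infimum over q ∈ (0,1) of (x - ln(1-q))/q equals h⁻¹(1 + x), where h(u) = u - ln u on [1,∞). -/

import Mathlib

/-- For every `x ≥ 0`, the infimum over `q ∈ (0,1)` of `(x - ln(1-q))/q` equals
`h⁻¹(1+x)`, where `h(u) = u - ln u` on `[1,∞)`. -/
theorem stmt1 (x : ℝ) (hx : 0 ≤ x) (h hinv : ℝ → ℝ)
    (hh : ∀ u, h u = u - Real.log u)
    (hinv1 : ∀ y ≥ (1:ℝ), 1 ≤ hinv y ∧ h (hinv y) = y) :
    IsGLB {v : ℝ | ∃ q ∈ Set.Ioo (0:ℝ) 1, v = (x - Real.log (1 - q))/q} (hinv (1+x)) := by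
  obtain ⟨hu1, hu2⟩ := hinv1 (1+x) (by linarith)
  set u := hinv (1+x) with hudef
  rw [hh] at hu2
  have hupos : 0 < u := by linarith
  have hxval : x = u - 1 - Real.log u := by linarith
  constructor
  · rintro v ⟨q, ⟨hq0, hq1⟩, rfl⟩
    rw [le_div_iff₀ hq0]
    have h1q : 0 < 1 - q := by linarith
    have key : Real.log ((1 - q) * u) ≤ (1 - q) * u - 1 :=
      Real.log_le_sub_one_of_pos (by positivity)
    rw [Real.log_mul (by linarith) (by linarith)] at key
    nlinarith [key]
  · intro b hb
    rcases eq_or_lt_of_le hu1 with heq | hlt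
    · -- u = 1, so x = 0
      have hlog : Real.log u = 0 := by rw [← heq, Real.log_one]
      have hx0 : x = 0 := by rw [hxval, hlog]; linarith
      rw [← heq]
      by_contra hb1
      push_neg at hb1
      set ε := (b - 1)/2 with hεdef
      have hε0 : 0 < ε := by simp only [hεdef]; linarith
      set q := ε / (1 + ε) with hqdef
      have hq0 : 0 < q := by positivity
      have hq1 : q < 1 := by
        rw [hqdef, div_lt_one (by linarith)]; linarith
      have h1q0 : 0 < 1 - q := by linarith
      have hble : b ≤ (x - Real.log (1 - q))/q := hb ⟨q, ⟨hq0, hq1⟩, rfl⟩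
      have hlogle : -Real.log (1 - q) ≤ q / (1 - q) := by
        have hlog2 := Real.log_le_sub_one_of_pos (x := (1-q)⁻¹) (by positivity)
        rw [Real.log_inv] at hlog2
        have : (1 - q)⁻¹ - 1 = q / (1 - q) := by field_simp; ring
        linarith [this ▸ hlog2]
      have h1 : (x - Real.log (1 - q))/q ≤ 1/(1-q) := by
        rw [hx0, zero_sub, div_le_div_iff₀ hq0 h1q0]
        calc -Real.log (1 - q) * (1 - q) ≤ (q / (1 - q)) * (1 - q) := by
              apply mul_le_mul_of_nonneg_right hlogle (le_of_lt h1q0)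
          _ = q := by field_simp
          _ = 1 * q := by ring
      have h2 : 1/(1-q) = 1 + ε := by
        rw [hqdef]; field_simp; ring
      rw [h2] at h1
      have : b ≤ 1 + ε := le_trans hble h1
      simp only [hεdef] at this
      linarith
    · -- u > 1: the value u is attained at q = 1 - 1/u
      apply hb
      refine ⟨1 - 1/u, ⟨?_, ?_⟩, ?_⟩
      · have : 1/u < 1 := by rw [div_lt_one hupos]; exact hlt
        linarith
      · have : 0 < 1/u := by positivity
        linarith
      · have hne : u ≠ 0 := ne_of_gt hupos
        have hsimp : (1 : ℝ) - (1 - 1/u) = 1/u := by ring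
        have hden : (1:ℝ) - 1/u ≠ 0 := by
          have : 1/u < 1 := by rw [div_lt_one hupos]; exact hlt
          intro hcon; rw [sub_eq_zero] at hcon; rw [← hcon] at this; linarith
        rw [one_div] at hden
        rw [hsimp, one_div, Real.log_inv, hxval, eq_div_iff hden]
        field_simp; ring
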